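/- There is no point in the plane of a regular pentagon with unit side length that is at rational distance from all five vertices of the pentagon. Concretely: for any c, w ∈ ℂ with |w·(exp(2πi/5) − 1)| = 1, setting z_k = c + w·exp(2πik/5) for k = 0,…,4 (the vertices of a unit regular pentagon), there is no p ∈ ℂ such that the distance |p − z_k| is rational for every k. -/

import Mathlib

open Complex Real

lemma aux_rat_mul_irr {x : ℝ} (a b : ℚ) (h : (a:ℝ) * x = (b:ℝ)) (hx : Irrational x) :
    (a:ℝ) = 0 := by
  by_contra ha
  have hx' : x = ((b / a : ℚ) : ℝ) := by
    push_cast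
    field_simp
    linarith [h]
  exact Rat.not_irrational _ (hx' ▸ hx)

lemma aux_key (u w : ℂ) (t : ℝ) (q : ℚ)
    (h : ‖u - w * Complex.exp ((t:ℂ) * Complex.I)‖ = q) :
    (q:ℝ)^2 = Complex.normSq u + Complex.normSq w
      - 2*((u * (starRingEnd ℂ) w).re * Real.cos t
           + (u * (starRingEnd ℂ) w).im * Real.sin t) := by
  have h2 : Complex.normSq (u - w * Complex.exp ((t:ℂ) * Complex.I)) = (q:ℝ)^2 := by
    rw [← Complex.sq_norm, h]
  rw [← h2, Complex.exp_mul_I, ← Complex.ofReal_cos, ← Complex.ofReal_sin]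
  have hc := Real.sin_sq_add_cos_sq t
  simp only [Complex.normSq_apply, Complex.mul_re, Complex.mul_im, Complex.sub_re,
    Complex.sub_im, Complex.add_re, Complex.add_im, Complex.I_re, Complex.I_im,
    Complex.ofReal_re, Complex.ofReal_im, Complex.conj_re, Complex.conj_im]
  nlinarith [hc]

lemma aux_normSq_exp (r : ℝ) (hcos2 : Real.cos (2*Real.pi/5) = (r - 1)/4) :
    Complex.normSq (Complex.exp (2*(Real.pi:ℂ)*Complex.I/5) - 1) = (5 - r)/2 := by
  rw [show (2*(Real.pi:ℂ)*Complex.I/5) = ((2*Real.pi/5:ℝ):ℂ)*Complex.I by push_cast; ring,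
    Complex.exp_mul_I, ← Complex.ofReal_cos, ← Complex.ofReal_sin]
  simp only [Complex.normSq_apply, Complex.sub_re, Complex.sub_im, Complex.add_re,
    Complex.add_im, Complex.mul_re, Complex.mul_im, Complex.I_re, Complex.I_im,
    Complex.ofReal_re, Complex.ofReal_im, Complex.one_re, Complex.one_im]
  nlinarith [Real.sin_sq_add_cos_sq (2*Real.pi/5), hcos2]

set_option maxHeartbeats 1000000 in
theorem no_rational_distance_point_pentagon (c w : ℂ)
    (hw : ‖w * (Complex.exp (2 * Real.pi * Complex.I / 5) - 1)‖ = 1) :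
    ¬ ∃ p : ℂ, ∀ k : Fin 5, ∃ q : ℚ,
      ‖p - (c + w * Complex.exp (2 * Real.pi * Complex.I * ((k : ℕ) : ℂ) / 5))‖ = q := by
  rintro ⟨p, hp⟩
  have h5 : Irrational (Real.sqrt 5) := by
    simpa using (by norm_num : Nat.Prime 5).irrational_sqrt
  set r : ℝ := Real.sqrt 5 with hrdef
  have hr2 : r ^ 2 = 5 := Real.sq_sqrt (by norm_num)
  -- trig values
  have hcos1 : Real.cos (π/5) = (1 + r)/4 := Real.cos_pi_div_five
  have hsinpos : 0 < Real.sin (π/5) :=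
    Real.sin_pos_of_pos_of_lt_pi (by positivity) (by nlinarith [Real.pi_pos])
  set sa : ℝ := Real.sin (π/5) with hsadef
  have hcos2 : Real.cos (2*π/5) = (r - 1)/4 := by
    rw [show (2*π/5 : ℝ) = 2*(π/5) by ring, Real.cos_two_mul, hcos1]
    linear_combination hr2/8
  have hsin2 : Real.sin (2*π/5) = 2*sa*((1+r)/4) := by
    rw [show (2*π/5 : ℝ) = 2*(π/5) by ring, Real.sin_two_mul, hcos1]
  have hcos3 : Real.cos (4*π/5) = -((1+r)/4) := by
    rw [show (4*π/5 : ℝ) = π - π/5 by ring, Real.cos_pi_sub, hcos1]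
  have hsin3 : Real.sin (4*π/5) = sa := by
    rw [show (4*π/5 : ℝ) = π - π/5 by ring, Real.sin_pi_sub]
  have hcos4 : Real.cos (6*π/5) = -((1+r)/4) := by
    rw [show (6*π/5 : ℝ) = π + π/5 by ring, Real.cos_add]
    simp [hcos1]
  have hsin4 : Real.sin (6*π/5) = -sa := by
    rw [show (6*π/5 : ℝ) = π + π/5 by ring, Real.sin_add]
    simp [hsadef]
  have hcos5 : Real.cos (8*π/5) = (r-1)/4 := by
    rw [show (8*π/5 : ℝ) = 2*π - 2*π/5 by ring, Real.cos_sub]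
    simp [hcos2]
  have hsin5 : Real.sin (8*π/5) = -(2*sa*((1+r)/4)) := by
    rw [show (8*π/5 : ℝ) = 2*π - 2*π/5 by ring, Real.sin_sub]
    simp [hsin2]
  -- the five equations
  obtain ⟨q0, h0⟩ := hp 0
  obtain ⟨q1, h1⟩ := hp 1
  obtain ⟨q2, h2⟩ := hp 2
  obtain ⟨q3, h3⟩ := hp 3
  obtain ⟨q4, h4⟩ := hp 4
  set u : ℂ := p - c with hudef
  set S : ℝ := Complex.normSq u + Complex.normSq w with hSdef
  set A : ℝ := (u * (starRingEnd ℂ) w).re with hAdef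
  set B : ℝ := (u * (starRingEnd ℂ) w).im with hBdef
  have E0 : (q0:ℝ)^2 = S - 2*(A * Real.cos 0 + B * Real.sin 0) := by
    refine aux_key u w 0 q0 ?_
    rw [← h0]
    congr 1
    rw [show ((2:ℂ) * ↑π * Complex.I * (((0:Fin 5):ℕ):ℂ) / 5) = ((0:ℝ):ℂ) * Complex.I by
      simp only [show (((0:Fin 5):ℕ):ℂ) = 0 by simp, show (((1:Fin 5):ℕ):ℂ) = 1 by simp,
        show (((2:Fin 5):ℕ):ℂ) = 2 by rfl, show (((3:Fin 5):ℕ):ℂ) = 3 by rfl,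
        show (((4:Fin 5):ℕ):ℂ) = 4 by rfl] <;> push_cast <;> ring]
    ring
  have E1 : (q1:ℝ)^2 = S - 2*(A * Real.cos (2*π/5) + B * Real.sin (2*π/5)) := by
    refine aux_key u w (2*π/5) q1 ?_
    rw [← h1]
    congr 1
    rw [show ((2:ℂ) * ↑π * Complex.I * (((1:Fin 5):ℕ):ℂ) / 5) = ((2*π/5:ℝ):ℂ) * Complex.I by
      simp only [show (((0:Fin 5):ℕ):ℂ) = 0 by simp, show (((1:Fin 5):ℕ):ℂ) = 1 by simp,
        show (((2:Fin 5):ℕ):ℂ) = 2 by rfl, show (((3:Fin 5):ℕ):ℂ) = 3 by rfl,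
        show (((4:Fin 5):ℕ):ℂ) = 4 by rfl] <;> push_cast <;> ring]
    ring
  have E2 : (q2:ℝ)^2 = S - 2*(A * Real.cos (4*π/5) + B * Real.sin (4*π/5)) := by
    refine aux_key u w (4*π/5) q2 ?_
    rw [← h2]
    congr 1
    rw [show ((2:ℂ) * ↑π * Complex.I * (((2:Fin 5):ℕ):ℂ) / 5) = ((4*π/5:ℝ):ℂ) * Complex.I by
      simp only [show (((0:Fin 5):ℕ):ℂ) = 0 by simp, show (((1:Fin 5):ℕ):ℂ) = 1 by simp,
        show (((2:Fin 5):ℕ):ℂ) = 2 by rfl, show (((3:Fin 5):ℕ):ℂ) = 3 by rfl,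
        show (((4:Fin 5):ℕ):ℂ) = 4 by rfl] <;> push_cast <;> ring]
    ring
  have E3 : (q3:ℝ)^2 = S - 2*(A * Real.cos (6*π/5) + B * Real.sin (6*π/5)) := by
    refine aux_key u w (6*π/5) q3 ?_
    rw [← h3]
    congr 1
    rw [show ((2:ℂ) * ↑π * Complex.I * (((3:Fin 5):ℕ):ℂ) / 5) = ((6*π/5:ℝ):ℂ) * Complex.I by
      simp only [show (((0:Fin 5):ℕ):ℂ) = 0 by simp, show (((1:Fin 5):ℕ):ℂ) = 1 by simp,
        show (((2:Fin 5):ℕ):ℂ) = 2 by rfl, show (((3:Fin 5):ℕ):ℂ) = 3 by rfl,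
        show (((4:Fin 5):ℕ):ℂ) = 4 by rfl] <;> push_cast <;> ring]
    ring
  have E4 : (q4:ℝ)^2 = S - 2*(A * Real.cos (8*π/5) + B * Real.sin (8*π/5)) := by
    refine aux_key u w (8*π/5) q4 ?_
    rw [← h4]
    congr 1
    rw [show ((2:ℂ) * ↑π * Complex.I * (((4:Fin 5):ℕ):ℂ) / 5) = ((8*π/5:ℝ):ℂ) * Complex.I by
      simp only [show (((0:Fin 5):ℕ):ℂ) = 0 by simp, show (((1:Fin 5):ℕ):ℂ) = 1 by simp,
        show (((2:Fin 5):ℕ):ℂ) = 2 by rfl, show (((3:Fin 5):ℕ):ℂ) = 3 by rfl,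
        show (((4:Fin 5):ℕ):ℂ) = 4 by rfl] <;> push_cast <;> ring]
    ring
  rw [Real.cos_zero, Real.sin_zero] at E0
  rw [hcos2, hsin2] at E1
  rw [hcos3, hsin3] at E2
  rw [hcos4, hsin4] at E3
  rw [hcos5, hsin5] at E4
  -- rationality bookkeeping
  have hS : S = (((q0^2+q1^2+q2^2+q3^2+q4^2)/5 : ℚ) : ℝ) := by
    push_cast
    linear_combination (-1/5)*E0 + (-1/5)*E1 + (-1/5)*E2 + (-1/5)*E3 + (-1/5)*E4
  set sq : ℚ := (q0^2+q1^2+q2^2+q3^2+q4^2)/5 with hsqdef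
  have hA : A = (((sq - q0^2)/2 : ℚ) : ℝ) := by
    push_cast
    push_cast at hS
    linear_combination hS/2 + E0/2
  -- A is zero
  have hAr : (((sq - q0^2)/2 : ℚ) : ℝ) * r
      = ((q2^2 + q3^2 - 2*sq - (sq - q0^2)/2 : ℚ) : ℝ) := by
    push_cast
    push_cast at hS hA
    linear_combination (-1)*E2 + (-1)*E3 + (-2)*hS + (-(1+r))*hA
  have hA0 : A = 0 := by
    rw [hA, aux_rat_mul_irr _ _ hAr h5]
  -- B is zero
  have hD : B * sa = (((q3^2 - q2^2)/4 : ℚ) : ℝ) := by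
    push_cast
    linear_combination (E2 - E3)/4
  have hDr : (((q3^2 - q2^2)/4 : ℚ) : ℝ) * r
      = (((q4^2 - q1^2)/2 - (q3^2 - q2^2)/4 : ℚ) : ℝ) := by
    push_cast
    push_cast at hD
    linear_combination (E1 - E4)/2 - (1+r)*hD
  have hB0 : B = 0 := by
    have h0' : (((q3^2 - q2^2)/4 : ℚ) : ℝ) = 0 := aux_rat_mul_irr _ _ hDr h5
    have := hD.trans h0'
    rcases mul_eq_zero.mp this with h | h
    · exact h
    · exact absurd h (ne_of_gt hsinpos)
  -- hence u = 0
  have hw0 : w ≠ 0 := by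
    rintro rfl
    simp at hw
  have hu0 : u = 0 := by
    have hz : u * (starRingEnd ℂ) w = 0 := by
      apply Complex.ext
      · rw [← hAdef]; simpa using hA0
      · rw [← hBdef]; simpa using hB0
    rcases mul_eq_zero.mp hz with h | h
    · exact h
    · exact absurd (by simpa using h) hw0
  have hnu : Complex.normSq u = 0 := by rw [hu0]; simp
  have hq0 : ((q0^2 : ℚ) : ℝ) = Complex.normSq w := by
    push_cast
    linear_combination E0 + hSdef - 2*hA0 + hnu
  -- the side length condition
  have hwn : Complex.normSq w * ((5 - r)/2) = 1 := by
    have hsq1 : Complex.normSq (w * (Complex.exp (2*(π:ℂ)*Complex.I/5) - 1)) = 1 := by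
      rw [← Complex.sq_norm, hw]
      norm_num
    rw [Complex.normSq_mul] at hsq1
    have h2 := aux_normSq_exp r hcos2
    rw [h2] at hsq1
    exact hsq1
  have hfin : ((q0^2 : ℚ) : ℝ) * r = ((5*q0^2 - 2 : ℚ) : ℝ) := by
    push_cast
    push_cast at hq0
    linear_combination (-2)*hwn + (r-5)*hq0
  have hz0 : ((q0^2 : ℚ) : ℝ) = 0 := aux_rat_mul_irr _ _ hfin h5
  have : Complex.normSq w = 0 := by rw [← hq0, hz0]
  exact hw0 (Complex.normSq_eq_zero.mp this)
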